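/- Let G be a connected simple graph on vertex set [N], let e = uv be an edge of G, and let G△e be the graph on [N] ∪ {N+1} with edges E(G) ∪ {u(N+1), v(N+1)}. If c is a D(G)-draconian sequence, then the sequence α(c) = (c_1,...,c_N, 1) is a D(G△e)-draconian sequence. Moreover α is injective. -/
import Mathlib


/-- `c : V → ℕ` is a `D(H)`-draconian sequence for the simple graph `H` on `V`:
the entries sum to `|V| - 1` and, for every nonempty `S ⊆ V`, the partial sum over `S`
is strictly less than the size of `⋃_{i ∈ S} N_{D(H)}(i)`, where
`N_{D(H)}(i) = {ī} ∪ {j̄ : ij ∈ E(H)}`. -/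
def DraconianD {V : Type*} [Fintype V] (H : SimpleGraph V) (c : V → ℕ) : Prop :=
  (∑ v, c v) = Fintype.card V - 1 ∧
    ∀ S : Finset V, S.Nonempty →
      (∑ i ∈ S, c i) < ((S : Set V) ∪ ⋃ i ∈ S, H.neighborSet i).ncard

/-- `G △ e` for `e = uv`: add a new vertex (`none`) adjacent to exactly `u` and `v`. -/
def triExt {V : Type*} (G : SimpleGraph V) (u v : V) : SimpleGraph (Option V) :=
  SimpleGraph.fromRel fun a b =>
    (∃ x y, a = some x ∧ b = some y ∧ G.Adj x y) ∨ (a = none ∧ (b = some u ∨ b = some v))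

lemma triExt_adj_some {V : Type*} (G : SimpleGraph V) (u v : V) {x y : V}
    (h : G.Adj x y) : (triExt G u v).Adj (some x) (some y) := by
  refine ⟨by simpa using h.ne, Or.inl (Or.inl ⟨x, y, rfl, rfl, h⟩)⟩

lemma triExt_adj_none {V : Type*} (G : SimpleGraph V) (u v : V) :
    (triExt G u v).Adj none (some u) := by
  exact ⟨by simp, Or.inl (Or.inr ⟨rfl, Or.inl rfl⟩)⟩

/-- If `G` is a connected graph on `[N]`, `e = uv` an edge, and `c` a `D(G)`-draconian
sequence, then `α(c) = (c, 1)` is a `D(G △ e)`-draconian sequence; moreover `α` is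
injective. -/
theorem stmt2 (N : ℕ) (G : SimpleGraph (Fin N)) (hconn : G.Connected)
    (u v : Fin N) (he : G.Adj u v) :
    (∀ c : Fin N → ℕ, DraconianD G c →
        DraconianD (triExt G u v) (fun o => o.elim 1 c)) ∧
      Function.Injective fun (c : Fin N → ℕ) (o : Option (Fin N)) => o.elim 1 c := by
  have hNpos : 0 < N := Fin.pos u
  constructor
  · rintro c ⟨hsum, hdrac⟩
    constructor
    · rw [Fintype.sum_option]
      simp only [Option.elim, Fintype.card_option, Fintype.card_fin] at *
      omega
    · intro S hS
      set S' : Finset (Fin N) := S.preimage some (Option.some_injective _).injOn with hS'def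
      have hmemS' : ∀ x : Fin N, x ∈ S' ↔ some x ∈ S := by
        intro x; simp [hS'def, Finset.mem_preimage]
      set T : Set (Option (Fin N)) :=
        (↑S : Set (Option (Fin N))) ∪ ⋃ o ∈ S, (triExt G u v).neighborSet o with hT
      set U : Set (Fin N) := (↑S' : Set (Fin N)) ∪ ⋃ i ∈ S', G.neighborSet i with hU
      have hsub : Option.some '' U ⊆ T := by
        rintro _ ⟨x, hx, rfl⟩
        rcases hx with hx | hx
        · exact Or.inl (by simpa using (hmemS' x).1 (by exact_mod_cast hx))
        · simp only [Set.mem_iUnion] at hx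
          obtain ⟨i, hi, hadj⟩ := hx
          refine Or.inr ?_
          simp only [Set.mem_iUnion]
          exact ⟨some i, (hmemS' i).1 hi, triExt_adj_some G u v hadj⟩
      have hcard : U.ncard ≤ T.ncard := by
        rw [← Set.ncard_image_of_injective U (Option.some_injective _)]
        exact Set.ncard_le_ncard hsub (Set.toFinite T)
      have himg : S.erase none = S'.image some := by
        ext o
        cases o with
        | none => simp
        | some x => simp [hmemS']
      have hsumS' : ∑ o ∈ S.erase none, (Option.elim o 1 c) = ∑ i ∈ S', c i := by
        rw [himg, Finset.sum_image (fun a _ b _ h => Option.some_injective _ h)]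
        rfl
      by_cases hnone : (none : Option (Fin N)) ∈ S
      · have hsumeq : ∑ o ∈ S, (Option.elim o 1 c) = 1 + ∑ i ∈ S', c i := by
          rw [← Finset.add_sum_erase S _ hnone, hsumS']
          rfl
        show ∑ o ∈ S, (Option.elim o 1 c) < T.ncard
        rw [hsumeq]
        rcases S'.eq_empty_or_nonempty with hE | hNE
        · have h2 : ({none, some u} : Set (Option (Fin N))) ⊆ T := by
            rintro o (rfl | rfl)
            · exact Or.inl (by simpa using hnone)
            · refine Or.inr ?_
              simp only [Set.mem_iUnion]
              exact ⟨none, hnone, triExt_adj_none G u v⟩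
          have : (2 : ℕ) ≤ T.ncard := by
            have h2card : ({none, some u} : Set (Option (Fin N))).ncard = 2 := by
              rw [Set.ncard_pair (by simp)]
            calc (2:ℕ) = ({none, some u} : Set (Option (Fin N))).ncard := h2card.symm
              _ ≤ T.ncard := Set.ncard_le_ncard h2 (Set.toFinite T)
          simp [hE]
          omega
        · have hd : ∑ i ∈ S', c i < U.ncard := hdrac S' hNE
          have hins : insert none (Option.some '' U) ⊆ T := by
            rintro o (rfl | ho)
            · exact Or.inl (by simpa using hnone)
            · exact hsub ho
          have hni : (none : Option (Fin N)) ∉ Option.some '' U := by simp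
          have : U.ncard + 1 ≤ T.ncard := by
            have := Set.ncard_le_ncard hins (Set.toFinite T)
            rwa [Set.ncard_insert_of_notMem hni (Set.toFinite _),
              Set.ncard_image_of_injective U (Option.some_injective _)] at this
          omega
      · have hSe : S.erase none = S := Finset.erase_eq_of_notMem hnone
        have hsumeq : ∑ o ∈ S, (Option.elim o 1 c) = ∑ i ∈ S', c i := by
          rw [← hSe, hsumS']
        have hNE : S'.Nonempty := by
          obtain ⟨o, ho⟩ := hS
          cases o with
          | none => exact absurd ho hnone
          | some x => exact ⟨x, (hmemS' x).2 ho⟩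
        have hd : ∑ i ∈ S', c i < U.ncard := hdrac S' hNE
        show ∑ o ∈ S, (Option.elim o 1 c) < T.ncard
        rw [hsumeq]
        omega
  · intro c c' h
    funext x
    exact congrFun h (some x)
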